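/- Let n ≥ 1 and let f : ℝⁿ → ℝ be symmetric and convex. Then the induced spectral function F on the real vector space of n×n real symmetric matrices, defined by F(A) = f(λ(A)), is convex: for all real symmetric n×n matrices A, B and all t ∈ [0,1], F(tA + (1−t)B) ≤ t F(A) + (1−t) F(B). -/

import Mathlib

open Matrix Finset

/-- A symmetric convex function is Schur-convex: applying a doubly stochastic
matrix decreases its value. -/
lemma aux_schur_convex {n : ℕ} (f : (Fin n → ℝ) → ℝ)
    (hsym : ∀ (σ : Equiv.Perm (Fin n)) (x : Fin n → ℝ), f (x ∘ σ) = f x)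
    (hconv : ConvexOn ℝ Set.univ f)
    {S : Matrix (Fin n) (Fin n) ℝ} (hS : S ∈ doublyStochastic ℝ (Fin n))
    (x : Fin n → ℝ) : f (S *ᵥ x) ≤ f x := by
  obtain ⟨w, hw0, hw1, hw⟩ := exists_eq_sum_perm_of_mem_doublyStochastic hS
  have hperm : ∀ σ : Equiv.Perm (Fin n), (σ.permMatrix ℝ) *ᵥ x = x ∘ σ := by
    intro σ; ext i
    simp [Equiv.Perm.permMatrix, mulVec, dotProduct, PEquiv.toMatrix_apply,
      Equiv.toPEquiv_apply]
  have hSx : S *ᵥ x = ∑ σ : Equiv.Perm (Fin n), w σ • (x ∘ σ) := by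
    rw [← hw]
    ext i
    simp only [mulVec, dotProduct, Finset.sum_apply, Pi.smul_apply, Matrix.sum_apply,
      Matrix.smul_apply, smul_eq_mul, Finset.sum_mul, Function.comp_apply]
    rw [Finset.sum_comm]
    refine Finset.sum_congr rfl fun σ _ => ?_
    have := congrFun (hperm σ) i
    simp only [mulVec, dotProduct, Function.comp_apply] at this
    rw [← this, Finset.mul_sum]
    exact Finset.sum_congr rfl fun j _ => by ring
  rw [hSx]
  calc f (∑ σ : Equiv.Perm (Fin n), w σ • (x ∘ σ))
      ≤ ∑ σ : Equiv.Perm (Fin n), w σ • f (x ∘ σ) :=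
        hconv.map_sum_le (fun σ _ => hw0 σ) hw1 (fun σ _ => Set.mem_univ _)
    _ = ∑ σ : Equiv.Perm (Fin n), w σ • f x := by
        refine Finset.sum_congr rfl fun σ _ => by rw [hsym]
    _ = f x := by rw [← Finset.sum_smul, hw1, one_smul]

/-- The entrywise square of a real orthogonal matrix is doubly stochastic. -/
lemma aux_sq_ds {n : ℕ} {W : Matrix (Fin n) (Fin n) ℝ}
    (hW : W ∈ Matrix.unitaryGroup (Fin n) ℝ) :
    Matrix.of (fun i j => (W i j) ^ 2) ∈ doublyStochastic ℝ (Fin n) := by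
  rw [mem_doublyStochastic_iff_sum]
  refine ⟨fun i j => sq_nonneg _, fun i => ?_, fun j => ?_⟩
  · have h := Matrix.mem_unitaryGroup_iff.mp hW
    have := congrFun (congrFun h i) i
    simp only [Matrix.mul_apply, Matrix.one_apply_eq, star_apply,
      Matrix.conjTranspose_apply, star_trivial] at this
    rw [← this]
    exact Finset.sum_congr rfl fun j _ => by simp [sq]
  · have h := Matrix.mem_unitaryGroup_iff'.mp hW
    have := congrFun (congrFun h j) j
    simp only [Matrix.mul_apply, Matrix.one_apply_eq, star_apply,
      Matrix.conjTranspose_apply, star_trivial] at this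
    rw [← this]
    exact Finset.sum_congr rfl fun i _ => by simp [sq]

/-- The diagonal of `Uᵀ A U` is a doubly stochastic image of the eigenvalues of `A`. -/
lemma aux_diag_le {n : ℕ} (f : (Fin n → ℝ) → ℝ)
    (hsym : ∀ (σ : Equiv.Perm (Fin n)) (x : Fin n → ℝ), f (x ∘ σ) = f x)
    (hconv : ConvexOn ℝ Set.univ f)
    {A : Matrix (Fin n) (Fin n) ℝ} (hA : A.IsHermitian)
    (U : Matrix.unitaryGroup (Fin n) ℝ) :
    f (fun i => ((star (U : Matrix (Fin n) (Fin n) ℝ)) * A * U) i i)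
      ≤ f hA.eigenvalues := by
  set V : Matrix (Fin n) (Fin n) ℝ := (hA.eigenvectorUnitary : Matrix (Fin n) (Fin n) ℝ) with hVdef
  set W : Matrix (Fin n) (Fin n) ℝ := (star (U : Matrix (Fin n) (Fin n) ℝ)) * V with hWdef
  have hWu : W ∈ Matrix.unitaryGroup (Fin n) ℝ :=
    Submonoid.mul_mem _ (Unitary.star_mem U.2) hA.eigenvectorUnitary.2
  have hspec : A = V * Matrix.diagonal hA.eigenvalues * star V := by
    have := hA.spectral_theorem
    simpa [RCLike.ofReal_real_eq_id] using this
  have hdiag : (fun i => ((star (U : Matrix (Fin n) (Fin n) ℝ)) * A * U) i i)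
      = (Matrix.of (fun i j => (W i j) ^ 2)) *ᵥ hA.eigenvalues := by
    funext i
    have hexp : (star (U : Matrix (Fin n) (Fin n) ℝ)) * A * U
        = W * Matrix.diagonal hA.eigenvalues * star W := by
      conv_lhs => rw [hspec]
      rw [hWdef]
      simp only [StarMul.star_mul, star_star, Matrix.mul_assoc]
    rw [hexp]
    simp only [Matrix.mul_apply, Matrix.diagonal_apply, Matrix.star_apply,
      star_trivial, mulVec, dotProduct, Matrix.of_apply, mul_ite, mul_zero,
      Finset.sum_ite_eq', Finset.mem_univ, if_true]
    exact Finset.sum_congr rfl fun k _ => by ring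
  rw [hdiag]
  exact aux_schur_convex f hsym hconv (aux_sq_ds hWu) _

/-- If `f : ℝⁿ → ℝ` (n ≥ 1) is symmetric and convex, then the induced
spectral function `F(A) = f(λ(A))` on real symmetric `n × n` matrices is convex. -/
theorem spectral_function_convex (n : ℕ) (hn : 1 ≤ n) (f : (Fin n → ℝ) → ℝ)
    (hsym : ∀ (σ : Equiv.Perm (Fin n)) (x : Fin n → ℝ), f (x ∘ σ) = f x)
    (hconv : ConvexOn ℝ Set.univ f)
    (A B : Matrix (Fin n) (Fin n) ℝ)
    (hA : A.IsHermitian) (hB : B.IsHermitian)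
    (t : ℝ) (ht0 : 0 ≤ t) (ht1 : t ≤ 1)
    (hC : (t • A + (1 - t) • B).IsHermitian) :
    f hC.eigenvalues ≤ t * f hA.eigenvalues + (1 - t) * f hB.eigenvalues := by
  set C := t • A + (1 - t) • B with hCdef
  set U := hC.eigenvectorUnitary with hUdef
  have hdiagC : (star (U : Matrix (Fin n) (Fin n) ℝ)) * C * U
      = Matrix.diagonal hC.eigenvalues := by
    have := hC.conjStarAlgAut_star_eigenvectorUnitary
    simpa [RCLike.ofReal_real_eq_id, Unitary.conjStarAlgAut_star_apply] using this
  set dA : Fin n → ℝ := fun i => ((star (U : Matrix (Fin n) (Fin n) ℝ)) * A * U) i i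
  set dB : Fin n → ℝ := fun i => ((star (U : Matrix (Fin n) (Fin n) ℝ)) * B * U) i i
  have hev : hC.eigenvalues = t • dA + (1 - t) • dB := by
    funext i
    have : hC.eigenvalues i = ((star (U : Matrix (Fin n) (Fin n) ℝ)) * C * U) i i := by
      rw [hdiagC, Matrix.diagonal_apply_eq]
    rw [this, hCdef]
    simp only [Matrix.mul_add, Matrix.add_mul, Matrix.mul_smul, Matrix.smul_mul,
      Matrix.add_apply, Matrix.smul_apply, smul_eq_mul, Pi.add_apply, Pi.smul_apply]
    rfl
  have h1 : f hC.eigenvalues ≤ t * f dA + (1 - t) * f dB := by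
    rw [hev]
    exact hconv.2 (Set.mem_univ dA) (Set.mem_univ dB) ht0 (by linarith) (by ring)
  have h2 : f dA ≤ f hA.eigenvalues := aux_diag_le f hsym hconv hA U
  have h3 : f dB ≤ f hB.eigenvalues := aux_diag_le f hsym hconv hB U
  calc f hC.eigenvalues ≤ t * f dA + (1 - t) * f dB := h1
    _ ≤ t * f hA.eigenvalues + (1 - t) * f hB.eigenvalues := by
        gcongr <;> linarith
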